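/- Let M1, M2 be independent finite-valued random variables that are jointly independent of the finite-valued sequence S^n = (S_1,…,S_n), and let M12 = f12(M1,S^n) for a deterministic function f12. Then for every i ∈ {1,…,n}, M2 is conditionally independent of (M1,S^n) given (M12,S^{i−1}). Consequently, if X1^n = f1(M1,S^n) and X2^n = f2(M2,M12), then X_{2,i} is conditionally independent of (X_{1,i},S_i) given U_i = (M12,S^{i−1}), i.e., the Markov chain X_{2,i} − U_i − (X_{1,i},S_i) holds. -/
import Mathlib


open scoped BigOperators Classical
open Finset

namespace Paper

variable {Ω : Type} [Fintype Ω]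

/-- `pr μ X a` is the probability that the random variable `X` takes the value `a`
under the pmf `μ` on the finite sample space `Ω`. -/
noncomputable def pr {A : Type} (μ : Ω → ℝ) (X : Ω → A) (a : A) : ℝ :=
  ∑ ω, if X ω = a then μ ω else 0

/-- `μ` is a probability mass function on the finite space `Ω`. -/
def IsPMF (μ : Ω → ℝ) : Prop := (∀ ω, 0 ≤ μ ω) ∧ ∑ ω, μ ω = 1

/-- Shannon entropy (in bits) of the random variable `X` under `μ`. -/
noncomputable def ent {A : Type} [Fintype A] (μ : Ω → ℝ) (X : Ω → A) : ℝ :=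
  -∑ a, pr μ X a * Real.logb 2 (pr μ X a)

/-- Mutual information `I(X;Y)` (in bits) under `μ`. -/
noncomputable def mi {A B : Type} [Fintype A] [Fintype B] (μ : Ω → ℝ)
    (X : Ω → A) (Y : Ω → B) : ℝ :=
  ent μ X + ent μ Y - ent μ (fun ω => (X ω, Y ω))

/-- Conditional mutual information `I(X;Y|Z)` (in bits) under `μ`. -/
noncomputable def cmi {A B C : Type} [Fintype A] [Fintype B] [Fintype C] (μ : Ω → ℝ)
    (X : Ω → A) (Y : Ω → B) (Z : Ω → C) : ℝ :=
  ent μ (fun ω => (X ω, Z ω)) + ent μ (fun ω => (Y ω, Z ω))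
    - ent μ (fun ω => (X ω, Y ω, Z ω)) - ent μ Z

/-- `X` and `Y` are conditionally independent given `Z` under `μ`:
`P(X = a, Y = b | Z = c) = P(X = a | Z = c) · P(Y = b | Z = c)`
whenever `P(Z = c) ≠ 0`. -/
def CondIndep {A B C : Type} (μ : Ω → ℝ) (X : Ω → A) (Y : Ω → B) (Z : Ω → C) : Prop :=
  ∀ a b c, pr μ Z c ≠ 0 →
    pr μ (fun ω => (X ω, Y ω, Z ω)) (a, b, c) * pr μ Z c
      = pr μ (fun ω => (X ω, Z ω)) (a, c) * pr μ (fun ω => (Y ω, Z ω)) (b, c)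


lemma pr_comp {A B : Type} [Fintype A] (μ : Ω → ℝ) (W : Ω → A) (F : A → B) (v : B) :
    pr μ (fun ω => F (W ω)) v = ∑ w, if F w = v then pr μ W w else 0 := by
  calc ∑ ω, (if F (W ω) = v then μ ω else 0)
      = ∑ ω, ∑ w, (if W ω = w then if F w = v then μ ω else 0 else 0) := by
        refine sum_congr rfl fun ω _ => ?_
        rw [Finset.sum_ite_eq]; simp
    _ = ∑ w, ∑ ω, (if W ω = w then if F w = v then μ ω else 0 else 0) := Finset.sum_comm
    _ = ∑ w, if F w = v then pr μ W w else 0 := by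
        refine sum_congr rfl fun w _ => ?_
        by_cases h : F w = v <;> simp [h, pr]

lemma sum_pr {A : Type} [Fintype A] (μ : Ω → ℝ) (X : Ω → A) :
    ∑ a, pr μ X a = ∑ ω, μ ω := by
  unfold pr
  rw [Finset.sum_comm]
  refine sum_congr rfl fun ω _ => ?_
  rw [Finset.sum_ite_eq]; simp

/-- If `X ⟂ Y` then `X ⟂ Y | g(Y)`. -/
lemma condIndep_of_indep {A B C : Type} [Fintype A] [Fintype B] (μ : Ω → ℝ)
    (X : Ω → A) (Y : Ω → B) (g : B → C)
    (h : ∀ a b, pr μ (fun ω => (X ω, Y ω)) (a, b) = pr μ X a * pr μ Y b) :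
    CondIndep μ X Y (fun ω => g (Y ω)) := by
  intro a b c _
  have h1 : pr μ (fun ω => (X ω, Y ω, g (Y ω))) (a, b, c)
      = if g b = c then pr μ (fun ω => (X ω, Y ω)) (a, b) else 0 := by
    by_cases hgb : g b = c
    · rw [if_pos hgb]
      refine sum_congr rfl fun ω _ => ?_
      by_cases hx : X ω = a <;> by_cases hy : Y ω = b <;>
        simp [Prod.ext_iff, hx, hy, hgb]
    · rw [if_neg hgb]
      refine Finset.sum_eq_zero fun ω _ => ?_
      by_cases hy : Y ω = b
      · simp [Prod.ext_iff, hy, hgb]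
      · simp [Prod.ext_iff, hy]
  have h2 : pr μ (fun ω => (Y ω, g (Y ω))) (b, c)
      = if g b = c then pr μ Y b else 0 := by
    by_cases hgb : g b = c
    · rw [if_pos hgb]
      refine sum_congr rfl fun ω _ => ?_
      by_cases hy : Y ω = b <;> simp [Prod.ext_iff, hy, hgb]
    · rw [if_neg hgb]
      refine Finset.sum_eq_zero fun ω _ => ?_
      by_cases hy : Y ω = b
      · simp [Prod.ext_iff, hy, hgb]
      · simp [Prod.ext_iff, hy]
  have h3 : pr μ (fun ω => (X ω, g (Y ω))) (a, c)
      = pr μ X a * pr μ (fun ω => g (Y ω)) c := by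
    refine (pr_comp μ (fun ω => (X ω, Y ω)) (fun w => (w.1, g w.2)) (a, c)).trans ?_
    rw [Fintype.sum_prod_type]
    rw [pr_comp μ Y g c, Finset.mul_sum]
    refine Eq.trans (b := ∑ x : A, if x = a
        then (∑ y : B, pr μ X a * if g y = c then pr μ Y y else 0) else 0)
      (sum_congr rfl fun x _ => ?_) ?_
    · by_cases hx : x = a
      · subst hx
        rw [if_pos rfl]
        refine sum_congr rfl fun y _ => ?_
        by_cases hy : g y = c <;> simp [Prod.ext_iff, hy, h]
      · rw [if_neg hx]
        refine Finset.sum_eq_zero fun y _ => ?_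
        simp [Prod.ext_iff, hx]
    · rw [Finset.sum_ite_eq' Finset.univ a]
      simp
  rw [h1, h2, h3]
  by_cases hgb : g b = c
  · rw [if_pos hgb, if_pos hgb, h a b]; ring
  · rw [if_neg hgb, if_neg hgb]; ring

/-- Closure of conditional independence under deterministic functions. -/
lemma condIndep_comp {A B C A' B' : Type} [Fintype A] [Fintype B] [Fintype C] (μ : Ω → ℝ)
    (X : Ω → A) (Y : Ω → B) (Z : Ω → C)
    (h : CondIndep μ X Y Z) (φ : A → C → A') (ψ : B → B') :
    CondIndep μ (fun ω => φ (X ω) (Z ω)) (fun ω => ψ (Y ω)) Z := by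
  intro a' b' c hc
  have e1 : pr μ (fun ω => (φ (X ω) (Z ω), ψ (Y ω), Z ω)) (a', b', c)
      = ∑ x, ∑ y, if φ x c = a' ∧ ψ y = b'
          then pr μ (fun ω => (X ω, Y ω, Z ω)) (x, y, c) else 0 := by
    refine (pr_comp μ (fun ω => (X ω, Y ω, Z ω))
      (fun w => (φ w.1 w.2.2, ψ w.2.1, w.2.2)) (a', b', c)).trans ?_
    rw [Fintype.sum_prod_type]
    refine sum_congr rfl fun x _ => ?_
    rw [Fintype.sum_prod_type]
    refine sum_congr rfl fun y _ => ?_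
    refine Eq.trans (b := ∑ z : C, if z = c then (if φ x c = a' ∧ ψ y = b' then pr μ (fun ω => (X ω, Y ω, Z ω)) (x, y, c) else 0) else 0)
      (sum_congr rfl fun z _ => ?_) ?_
    · by_cases hz : z = c
      · subst hz
        rw [if_pos rfl]
        by_cases h1 : φ x z = a' <;> by_cases h2 : ψ y = b' <;>
          simp [Prod.ext_iff, h1, h2]
      · rw [if_neg hz]
        simp [Prod.ext_iff, hz]
    · rw [Finset.sum_ite_eq' Finset.univ c]
      simp
  have e2 : pr μ (fun ω => (φ (X ω) (Z ω), Z ω)) (a', c)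
      = ∑ x, if φ x c = a' then pr μ (fun ω => (X ω, Z ω)) (x, c) else 0 := by
    refine (pr_comp μ (fun ω => (X ω, Z ω)) (fun w => (φ w.1 w.2, w.2)) (a', c)).trans ?_
    rw [Fintype.sum_prod_type]
    refine sum_congr rfl fun x _ => ?_
    refine Eq.trans (b := ∑ z : C, if z = c then (if φ x c = a' then pr μ (fun ω => (X ω, Z ω)) (x, c) else 0) else 0)
      (sum_congr rfl fun z _ => ?_) ?_
    · by_cases hz : z = c
      · subst hz
        rw [if_pos rfl]
        by_cases h1 : φ x z = a' <;> simp [Prod.ext_iff, h1]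
      · rw [if_neg hz]
        simp [Prod.ext_iff, hz]
    · rw [Finset.sum_ite_eq' Finset.univ c]
      simp
  have e3 : pr μ (fun ω => (ψ (Y ω), Z ω)) (b', c)
      = ∑ y, if ψ y = b' then pr μ (fun ω => (Y ω, Z ω)) (y, c) else 0 := by
    refine (pr_comp μ (fun ω => (Y ω, Z ω)) (fun w => (ψ w.1, w.2)) (b', c)).trans ?_
    rw [Fintype.sum_prod_type]
    refine sum_congr rfl fun y _ => ?_
    refine Eq.trans (b := ∑ z : C, if z = c then (if ψ y = b' then pr μ (fun ω => (Y ω, Z ω)) (y, c) else 0) else 0)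
      (sum_congr rfl fun z _ => ?_) ?_
    · by_cases hz : z = c
      · subst hz
        rw [if_pos rfl]
        by_cases h1 : ψ y = b' <;> simp [Prod.ext_iff, h1]
      · rw [if_neg hz]
        simp [Prod.ext_iff, hz]
    · rw [Finset.sum_ite_eq' Finset.univ c]
      simp
  rw [e1, e2, e3, Finset.sum_mul_sum, Finset.sum_mul]
  refine sum_congr rfl fun x _ => ?_
  rw [Finset.sum_mul]
  refine sum_congr rfl fun y _ => ?_
  by_cases hx : φ x c = a' <;> by_cases hy : ψ y = b' <;>
    simp [hx, hy, h x y c hc]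

/-- Markov chains in the converse of Theorem 1: with `M₁, M₂` independent of each other
and of `Sⁿ`, and `M₁₂ = f₁₂(M₁,Sⁿ)`, for every `i` the chain
`M₂ − (M₁₂,Sⁱ⁻¹) − (M₁,Sⁿ)` holds; consequently, with `X₁ⁿ = f₁(M₁,Sⁿ)` and
`X₂ⁿ = f₂(M₂,M₁₂)`, the chain `X₂ᵢ − Uᵢ − (X₁ᵢ,Sᵢ)` holds, where `Uᵢ = (M₁₂,Sⁱ⁻¹)`. -/
theorem markov_chain_one_way
    {Ω : Type} [Fintype Ω] (μ : Ω → ℝ) (hμ : IsPMF μ)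
    {n : ℕ} {𝒮 𝒳₁ 𝒳₂ ℳ₁ ℳ₂ ℳ₁₂ : Type}
    [Fintype 𝒮] [Fintype 𝒳₁] [Fintype 𝒳₂]
    [Fintype ℳ₁] [Fintype ℳ₂] [Fintype ℳ₁₂]
    (S : Fin n → Ω → 𝒮) (M1 : Ω → ℳ₁) (M2 : Ω → ℳ₂)
    (f12 : ℳ₁ → (Fin n → 𝒮) → ℳ₁₂)
    (f1 : ℳ₁ → (Fin n → 𝒮) → Fin n → 𝒳₁)
    (f2 : ℳ₂ → ℳ₁₂ → Fin n → 𝒳₂)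
    (M12 : Ω → ℳ₁₂) (hM12 : ∀ ω, M12 ω = f12 (M1 ω) (fun i => S i ω))
    (X1 : Fin n → Ω → 𝒳₁) (hX1 : ∀ i ω, X1 i ω = f1 (M1 ω) (fun j => S j ω) i)
    (X2 : Fin n → Ω → 𝒳₂) (hX2 : ∀ i ω, X2 i ω = f2 (M2 ω) (M12 ω) i)
    (hindep : ∀ (m1 : ℳ₁) (m2 : ℳ₂) (s : Fin n → 𝒮),
      pr μ (fun ω => (M1 ω, M2 ω, fun i => S i ω)) (m1, m2, s)
        = pr μ M1 m1 * pr μ M2 m2 * pr μ (fun ω => fun i => S i ω) s) :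
    ∀ i : Fin n,
      CondIndep μ M2 (fun ω => (M1 ω, fun j => S j ω))
        (fun ω => (M12 ω, fun j : {j : Fin n // j < i} => S j.1 ω)) ∧
      CondIndep μ (X2 i) (fun ω => (X1 i ω, S i ω))
        (fun ω => (M12 ω, fun j : {j : Fin n // j < i} => S j.1 ω)) := by
  -- marginal independence of (M1, Sⁿ)
  have hsum2 : ∑ y : ℳ₂, pr μ M2 y = 1 := by rw [sum_pr]; exact hμ.2
  have hmarg : ∀ (m1 : ℳ₁) (s : Fin n → 𝒮),
      pr μ (fun ω => (M1 ω, fun j => S j ω)) (m1, s)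
        = pr μ M1 m1 * pr μ (fun ω => fun i => S i ω) s := by
    intro m1 s
    refine (pr_comp μ (fun ω => (M1 ω, M2 ω, fun j => S j ω))
      (fun w => (w.1, w.2.2)) (m1, s)).trans ?_
    rw [Fintype.sum_prod_type]
    refine Eq.trans (b := ∑ x : ℳ₁, if x = m1
        then pr μ M1 m1 * pr μ (fun ω => fun i => S i ω) s else 0)
      (sum_congr rfl fun x _ => ?_) ?_
    · rw [Fintype.sum_prod_type]
      by_cases hx : x = m1
      · subst hx
        rw [if_pos rfl]
        refine Eq.trans (b := ∑ y : ℳ₂,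
            pr μ M1 x * pr μ M2 y * pr μ (fun ω => fun i => S i ω) s)
          (sum_congr rfl fun y _ => ?_) ?_
        · refine Eq.trans (b := ∑ z : Fin n → 𝒮, if z = s
              then pr μ M1 x * pr μ M2 y * pr μ (fun ω => fun i => S i ω) s else 0)
            (sum_congr rfl fun z _ => ?_) ?_
          · by_cases hz : z = s
            · subst hz; simp [Prod.ext_iff, hindep]
            · simp [Prod.ext_iff, hz]
          · rw [Finset.sum_ite_eq' Finset.univ s]; simp
        · have e : ∀ y : ℳ₂, pr μ M1 x * pr μ M2 y * pr μ (fun ω => fun i => S i ω) s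
              = (pr μ M1 x * pr μ (fun ω => fun i => S i ω) s) * pr μ M2 y := fun y => by ring
          rw [sum_congr rfl fun y _ => e y, ← Finset.mul_sum, hsum2, mul_one]
      · rw [if_neg hx]
        refine Finset.sum_eq_zero fun y _ => Finset.sum_eq_zero fun z _ => ?_
        simp [Prod.ext_iff, hx]
    · rw [Finset.sum_ite_eq' Finset.univ m1]; simp
  -- pairwise independence of M2 and (M1, Sⁿ)
  have hpair : ∀ (a : ℳ₂) (p : ℳ₁ × (Fin n → 𝒮)),
      pr μ (fun ω => (M2 ω, (M1 ω, fun j => S j ω))) (a, p)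
        = pr μ M2 a * pr μ (fun ω => (M1 ω, fun j => S j ω)) p := by
    intro a p
    obtain ⟨m1, s⟩ := p
    have swap : pr μ (fun ω => (M2 ω, (M1 ω, fun j => S j ω))) (a, (m1, s))
        = pr μ (fun ω => (M1 ω, M2 ω, fun j => S j ω)) (m1, a, s) := by
      refine sum_congr rfl fun ω _ => ?_
      by_cases h1 : M1 ω = m1 <;> by_cases h2 : M2 ω = a <;>
        by_cases h3 : (fun j => S j ω) = s <;> simp [Prod.ext_iff, h1, h2, h3]
    rw [swap, hindep, hmarg]
    ring
  intro i
  set g : ℳ₁ × (Fin n → 𝒮) → ℳ₁₂ × ({j : Fin n // j < i} → 𝒮) :=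
    fun p => (f12 p.1 p.2, fun j => p.2 j.1) with hg
  have hZ : (fun ω => (M12 ω, fun j : {j : Fin n // j < i} => S j.1 ω))
      = fun ω => g (M1 ω, fun j => S j ω) := funext fun ω => by rw [hM12 ω]
  have h1 : CondIndep μ M2 (fun ω => (M1 ω, fun j => S j ω))
      (fun ω => g (M1 ω, fun j => S j ω)) :=
    condIndep_of_indep μ M2 (fun ω => (M1 ω, fun j => S j ω)) g (fun a b => hpair a b)
  have h1' : CondIndep μ M2 (fun ω => (M1 ω, fun j => S j ω))
      (fun ω => (M12 ω, fun j : {j : Fin n // j < i} => S j.1 ω)) := by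
    rw [hZ]; exact h1
  refine ⟨h1', ?_⟩
  have h2 := condIndep_comp μ M2 (fun ω => (M1 ω, fun j => S j ω))
    (fun ω => (M12 ω, fun j : {j : Fin n // j < i} => S j.1 ω)) h1'
    (fun m2 z => f2 m2 z.1 i) (fun p => (f1 p.1 p.2 i, p.2 i))
  have hA : (X2 i) = fun ω => f2 (M2 ω) (M12 ω) i := funext fun ω => hX2 i ω
  have hB : (fun ω => (X1 i ω, S i ω))
      = fun ω => (f1 (M1 ω) (fun j => S j ω) i, S i ω) :=
    funext fun ω => by rw [hX1 i ω]
  rw [hA, hB]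
  exact h2


end Paper
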